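/- For every natural number l, r_l + r_{l+1} = 2 s_l, where r_m = Σ_j S(m,j)·j! and s_l = Σ_j S(l,j)·(j+1)!. -/
import Mathlib


def stirling2 : ℕ → ℕ → ℕ
  | 0, 0 => 1
  | 0, _ + 1 => 0
  | _ + 1, 0 => 0
  | n + 1, k + 1 => stirling2 n k + (k + 1) * stirling2 n (k + 1)

/-- Fubini number: number of preferential arrangements of an `l`-set. -/
def fubini (l : ℕ) : ℕ := ∑ k ∈ Finset.range (l + 1), stirling2 l k * Nat.factorial k

/-- Barred preferential arrangement number. -/
def barredFubini (l : ℕ) : ℕ :=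
  ∑ k ∈ Finset.range (l + 1), stirling2 l k * Nat.factorial (k + 1)

lemma stirling2_eq_zero : ∀ {n k : ℕ}, n < k → stirling2 n k = 0
  | 0, _+1, _ => rfl
  | n+1, k+1, h => by
    have h1 : n < k := Nat.lt_of_succ_lt_succ h
    simp [stirling2, stirling2_eq_zero h1, stirling2_eq_zero (Nat.lt_succ_of_lt h1)]

theorem stmt_15 (l : ℕ) :
    fubini l + fubini (l + 1) = 2 * barredFubini l := by
  unfold fubini barredFubini
  rw [Finset.sum_range_succ' (fun k => stirling2 (l+1) k * Nat.factorial k) (l+1)]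
  have h0 : stirling2 (l+1) 0 * Nat.factorial 0 = 0 := rfl
  rw [h0, add_zero]
  have hrec : ∀ k, stirling2 (l+1) (k+1) * Nat.factorial (k+1)
      = stirling2 l k * Nat.factorial (k+1)
        + (k+1) * (stirling2 l (k+1) * Nat.factorial (k+1)) := by
    intro k
    show (stirling2 l k + (k+1) * stirling2 l (k+1)) * _ = _
    ring
  simp only [hrec]
  rw [Finset.sum_add_distrib]
  have hshift : ∑ k ∈ Finset.range (l+1), (k+1) * (stirling2 l (k+1) * Nat.factorial (k+1))
      = ∑ k ∈ Finset.range (l+1), k * (stirling2 l k * Nat.factorial k) := by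
    have h := Finset.sum_range_succ' (fun k => k * (stirling2 l k * Nat.factorial k)) (l+1)
    rw [Finset.sum_range_succ] at h
    simp only [stirling2_eq_zero (Nat.lt_succ_self l), Nat.mul_zero, Nat.zero_mul,
      Nat.add_zero, Nat.zero_add] at h
    exact h.symm
  rw [hshift, two_mul]
  have key : ∑ k ∈ Finset.range (l+1), stirling2 l k * Nat.factorial k
      + ∑ k ∈ Finset.range (l+1), k * (stirling2 l k * Nat.factorial k)
      = ∑ k ∈ Finset.range (l+1), stirling2 l k * Nat.factorial (k+1) := by
    rw [← Finset.sum_add_distrib]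
    refine Finset.sum_congr rfl fun k _ => ?_
    rw [Nat.factorial_succ]
    ring
  omega
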